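/- Let M ∈ ℝ^{n×n} be symmetric positive definite, H ∈ ℝ^{n×n} symmetric, and let u₁, …, uₙ be an M-orthonormal basis with H uⱼ = λⱼ M uⱼ, where μ ≤ |λⱼ| ≤ L for all j for constants 0 < μ ≤ L, exactly the first k eigenvalues λ₁, …, λ_k being negative. Let V = [u₁, …, u_k], R = I − 2∑_{j=1}^k uⱼuⱼᵀM, η = 2/(L+μ), and κ = L/μ. Then for every e ∈ ℝⁿ, ‖e − η R M⁻¹ H e‖_M ≤ ((κ − 1)/(κ + 1)) ‖e‖_M. -/

import Mathlib

open Matrix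

noncomputable def mNorm {n : ℕ} (M : Matrix (Fin n) (Fin n) ℝ) (v : Fin n → ℝ) : ℝ :=
  Real.sqrt (v ⬝ᵥ (M *ᵥ v))

/-- Let `M` be SPD, `H` symmetric, `u₁, …, uₙ` an `M`-orthonormal
basis with `H uⱼ = λⱼ M uⱼ`, `μ ≤ |λⱼ| ≤ L` and exactly the first `k`
eigenvalues negative. With `R = I − 2∑_{j≤k} uⱼuⱼᵀM`, `η = 2/(L+μ)`,
`κ = L/μ`, for every `e ∈ ℝⁿ`:
`‖e − η R M⁻¹ H e‖_M ≤ ((κ−1)/(κ+1)) ‖e‖_M`. -/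
theorem contraction_bound
    (n k : ℕ) (hk : k ≤ n) (M H : Matrix (Fin n) (Fin n) ℝ)
    (hM : M.PosDef) (hH : H.IsSymm)
    (u : Fin n → (Fin n → ℝ)) (lam : Fin n → ℝ)
    (hortho : ∀ i j, u i ⬝ᵥ (M *ᵥ u j) = if i = j then (1 : ℝ) else 0)
    (heig : ∀ j, H *ᵥ u j = lam j • (M *ᵥ u j))
    (μ L : ℝ) (hμ : 0 < μ) (hμL : μ ≤ L)
    (hbound : ∀ j, μ ≤ |lam j| ∧ |lam j| ≤ L)
    (hneg : ∀ j : Fin n, lam j < 0 ↔ (j : ℕ) < k)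
    (η κ : ℝ) (hη : η = 2 / (L + μ)) (hκ : κ = L / μ) :
    ∀ e : Fin n → ℝ,
      mNorm M (e - η • ((1 - (2 : ℝ) • ∑ j ∈ Finset.univ.filter (fun j : Fin n => (j : ℕ) < k),
          vecMulVec (u j) (u j) * M) *ᵥ (M⁻¹ *ᵥ (H *ᵥ e))))
        ≤ ((κ - 1) / (κ + 1)) * mNorm M e := by
  intro e
  have hLμ : (0:ℝ) < L + μ := by linarith
  have hMinvM : M⁻¹ * M = 1 := Matrix.nonsing_inv_mul M hM.det_pos.ne'.isUnit
  set P : Matrix (Fin n) (Fin n) ℝ :=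
    ∑ j ∈ Finset.univ.filter (fun j : Fin n => (j : ℕ) < k), vecMulVec (u j) (u j) * M with hP
  set c : Fin n → ℝ := fun j => u j ⬝ᵥ (M *ᵥ e) with hc
  set d : Fin n → ℝ := fun j => 1 - η * |lam j| with hd
  set r : ℝ := (L - μ) / (L + μ) with hr
  have hr0 : 0 ≤ r := div_nonneg (by linarith) hLμ.le
  -- linearity helper
  have hlin : ∀ (B : Matrix (Fin n) (Fin n) ℝ) (a : Fin n → ℝ),
      B *ᵥ (∑ j, a j • u j) = ∑ j, a j • (B *ᵥ u j) := by
    intro B a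
    rw [show B *ᵥ (∑ j, a j • u j) = B.mulVecLin (∑ j, a j • u j) from rfl, map_sum]
    simp [Matrix.mulVec_smul]
  -- expansion of e
  have hexp : e = ∑ j, c j • u j := by
    set U : Matrix (Fin n) (Fin n) ℝ := Matrix.of (fun i j => u j i) with hUdef
    have hU1 : (Uᵀ * M) * U = 1 := by
      ext i j
      have h := hortho i j
      simp only [dotProduct, mulVec, Finset.mul_sum] at h
      simp only [Matrix.mul_apply, Matrix.transpose_apply, Matrix.of_apply, Matrix.one_apply,
        Finset.sum_mul, hUdef]
      rw [Finset.sum_comm]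
      simpa [mul_assoc] using h
    have hU2 : U * (Uᵀ * M) = 1 := mul_eq_one_comm.mpr hU1
    have h1 : U *ᵥ ((Uᵀ * M) *ᵥ e) = e := by
      rw [Matrix.mulVec_mulVec, hU2, Matrix.one_mulVec]
    have h2 : (Uᵀ * M) *ᵥ e = c := by
      funext j
      simp only [mulVec, dotProduct, Matrix.mul_apply, Matrix.transpose_apply, Matrix.of_apply,
        hUdef, hc, Finset.sum_mul, Finset.mul_sum]
      rw [Finset.sum_comm]
      exact Finset.sum_congr rfl fun a _ => Finset.sum_congr rfl fun b _ => by ring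
    funext i
    rw [← h1, h2]
    simp [mulVec, dotProduct, hUdef, Finset.sum_apply, mul_comm]
  -- rank-one actions
  have hvmv : ∀ (a b v : Fin n → ℝ), vecMulVec a b *ᵥ v = (b ⬝ᵥ v) • a := by
    intro a b v
    funext i
    simp only [mulVec, dotProduct, vecMulVec_apply, Pi.smul_apply, smul_eq_mul, Finset.sum_mul]
    exact Finset.sum_congr rfl fun x _ => by ring
  have hsumMV : ∀ (s : Finset (Fin n)) (f : Fin n → Matrix (Fin n) (Fin n) ℝ) (v : Fin n → ℝ),
      (∑ i ∈ s, f i) *ᵥ v = ∑ i ∈ s, (f i *ᵥ v) := by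
    intro s f v
    funext i
    simp only [mulVec, dotProduct, Matrix.sum_apply, Finset.sum_mul, Finset.sum_apply]
    exact Finset.sum_comm
  have hPu : ∀ j : Fin n, P *ᵥ u j = if (j : ℕ) < k then u j else 0 := by
    intro j
    rw [hP, hsumMV]
    have hterm : ∀ i : Fin n, (vecMulVec (u i) (u i) * M) *ᵥ u j
        = (if i = j then (1:ℝ) else 0) • u i := by
      intro i
      rw [← Matrix.mulVec_mulVec, hvmv, hortho]
    simp only [hterm]
    by_cases hj : (j : ℕ) < k
    · rw [Finset.sum_eq_single j]
      · simp [hj]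
      · intro b _ hb; simp [hb]
      · intro hmem; simp [hj] at hmem
    · rw [Finset.sum_eq_zero, if_neg hj]
      intro b hb
      have hbj : b ≠ j := by
        rintro rfl
        exact hj (by simpa using (Finset.mem_filter.mp hb).2)
      simp [hbj]
  have hGu : ∀ j : Fin n,
      (1 - (2:ℝ) • P) *ᵥ (M⁻¹ *ᵥ (H *ᵥ u j)) = |lam j| • u j := by
    intro j
    rw [heig j, Matrix.mulVec_smul, Matrix.mulVec_mulVec, hMinvM, Matrix.one_mulVec,
      Matrix.mulVec_smul, Matrix.sub_mulVec, Matrix.one_mulVec, Matrix.smul_mulVec, hPu]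
    by_cases hj : (j : ℕ) < k
    · have hneg' : lam j < 0 := (hneg j).mpr hj
      rw [if_pos hj, abs_of_neg hneg']
      funext i
      simp only [Pi.smul_apply, Pi.sub_apply, smul_eq_mul, Pi.neg_apply]
      ring
    · have hpos : 0 ≤ lam j := le_of_not_gt (fun h => hj ((hneg j).mp h))
      rw [if_neg hj, abs_of_nonneg hpos]
      simp
  -- the error vector in coordinates
  have hvec : e - η • ((1 - (2:ℝ) • P) *ᵥ (M⁻¹ *ᵥ (H *ᵥ e)))
      = ∑ j, (c j * d j) • u j := by
    have hB : ∀ v : Fin n → ℝ, (1 - (2:ℝ) • P) *ᵥ (M⁻¹ *ᵥ (H *ᵥ v))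
        = ((1 - (2:ℝ) • P) * (M⁻¹ * H)) *ᵥ v := by
      intro v
      rw [Matrix.mulVec_mulVec, Matrix.mulVec_mulVec, Matrix.mul_assoc]
    rw [hB]
    conv_lhs => rw [hexp]
    rw [hlin]
    have hBu : ∀ j, ((1 - (2:ℝ) • P) * (M⁻¹ * H)) *ᵥ u j = |lam j| • u j := by
      intro j; rw [← hB]; exact hGu j
    simp only [hBu, Finset.smul_sum, ← Finset.sum_sub_distrib]
    refine Finset.sum_congr rfl fun j _ => ?_
    funext i
    simp only [Pi.sub_apply, Pi.smul_apply, smul_eq_mul, hd]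
    ring
  -- Parseval
  have hdsum : ∀ (v : Fin n → ℝ) (f : Fin n → (Fin n → ℝ)),
      v ⬝ᵥ (∑ j, f j) = ∑ j, v ⬝ᵥ f j := by
    intro v f
    simp only [dotProduct, Finset.sum_apply, Finset.mul_sum]
    rw [Finset.sum_comm]
  have hsumd : ∀ (v : Fin n → ℝ) (f : Fin n → (Fin n → ℝ)),
      (∑ j, f j) ⬝ᵥ v = ∑ j, f j ⬝ᵥ v := by
    intro v f
    simp only [dotProduct, Finset.sum_apply, Finset.sum_mul]
    rw [Finset.sum_comm]
  have hnorm : ∀ a : Fin n → ℝ,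
      (∑ j, a j • u j) ⬝ᵥ (M *ᵥ (∑ j, a j • u j)) = ∑ j, (a j) ^ 2 := by
    intro a
    rw [hlin, hdsum]
    simp only [dotProduct_smul, hsumd, smul_dotProduct, smul_eq_mul, hortho]
    refine Finset.sum_congr rfl fun j _ => ?_
    simp [Finset.sum_ite_eq, mul_ite, sq]
  -- numeric bound on d
  have hdr : ∀ j, |d j| ≤ r := by
    intro j
    obtain ⟨h1, h2⟩ := hbound j
    have habs : d j = ((L + μ) - 2 * |lam j|) / (L + μ) := by
      simp only [hd, hη]
      field_simp
    rw [habs, hr, abs_div, abs_of_pos hLμ, div_le_div_iff_of_pos_right hLμ, abs_le]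
    constructor <;> linarith
  have hκr : (κ - 1) / (κ + 1) = r := by
    rw [hκ, hr]
    rw [div_sub' hμ.ne', div_add' _ _ _ hμ.ne']
    rw [div_div_div_cancel_right₀]
    · ring_nf
    · exact hμ.ne'
  -- finish
  rw [hκr, mNorm, mNorm, hvec]
  conv_lhs => rw [hnorm]
  conv_rhs => rw [hexp, hnorm]
  have hsum : ∑ j, (c j * d j) ^ 2 ≤ r ^ 2 * ∑ j, (c j) ^ 2 := by
    rw [Finset.mul_sum]
    refine Finset.sum_le_sum fun j _ => ?_
    have h1 : (d j) ^ 2 ≤ r ^ 2 := by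
      have := abs_le.mp (hdr j)
      nlinarith
    nlinarith [sq_nonneg (c j)]
  calc Real.sqrt (∑ j, (c j * d j) ^ 2) ≤ Real.sqrt (r ^ 2 * ∑ j, (c j) ^ 2) :=
        Real.sqrt_le_sqrt hsum
    _ = r * Real.sqrt (∑ j, (c j) ^ 2) := by
        rw [Real.sqrt_mul (sq_nonneg r), Real.sqrt_sq hr0]
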